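/- Let μ be the scale-4 Cantor measure (satisfying ∫ f dμ = (1/2)(∫ f(x/4) dμ + ∫ f(x/4+1/2) dμ)), and let P = { l₀ + 4l₁ + 4²l₂ + ⋯ : lᵢ ∈ {0,1}, finite sums }. Then the exponentials e_λ(x) = e^{2πiλx}, λ ∈ P, are mutually orthogonal in L²(μ). -/
import Mathlib


open MeasureTheory

/-- The set of nonnegative integers (viewed in `ℝ`) whose base-4 expansion uses
only the digits 0 and 1, i.e. `P = {l₀ + 4l₁ + 4²l₂ + ⋯ : lᵢ ∈ {0,1}}`. -/
def P4 : Set ℝ :=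
  {lam : ℝ | ∃ (n : ℕ) (l : ℕ → ℕ), (∀ i, l i ≤ 1) ∧
    lam = ∑ i ∈ Finset.range n, (l i : ℝ) * 4 ^ i}

noncomputable def Fhat (μ : Measure ℝ) (t : ℝ) : ℂ :=
  ∫ x, Complex.exp (((2 * Real.pi * (t * x) : ℝ) : ℂ) * Complex.I) ∂μ

lemma int_bounded (μ : Measure ℝ) [IsProbabilityMeasure μ] {f : ℝ → ℝ}
    (hf : Continuous f) (hb : ∀ x, |f x| ≤ 1) : Integrable f μ :=
  (integrable_const (1:ℝ)).mono' hf.aestronglyMeasurable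
    (Filter.Eventually.of_forall (by simpa [Real.norm_eq_abs] using hb))

lemma int_cos (μ : Measure ℝ) [IsProbabilityMeasure μ] (t : ℝ) :
    Integrable (fun x => Real.cos (2 * Real.pi * (t * x))) μ :=
  int_bounded μ (by continuity) (fun x => Real.abs_cos_le_one _)

lemma int_sin (μ : Measure ℝ) [IsProbabilityMeasure μ] (t : ℝ) :
    Integrable (fun x => Real.sin (2 * Real.pi * (t * x))) μ :=
  int_bounded μ (by continuity) (fun x => Real.abs_sin_le_one _)

lemma Fhat_decomp (μ : Measure ℝ) [IsProbabilityMeasure μ] (t : ℝ) :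
    Fhat μ t = ((∫ x, Real.cos (2 * Real.pi * (t * x)) ∂μ : ℝ) : ℂ)
      + ((∫ x, Real.sin (2 * Real.pi * (t * x)) ∂μ : ℝ) : ℂ) * Complex.I := by
  unfold Fhat
  have h1 : ∀ x : ℝ, Complex.exp (((2 * Real.pi * (t * x) : ℝ) : ℂ) * Complex.I)
      = ((Real.cos (2 * Real.pi * (t * x)) : ℝ) : ℂ)
        + ((Real.sin (2 * Real.pi * (t * x)) : ℝ) : ℂ) * Complex.I := by
    intro x
    rw [Complex.exp_mul_I, Complex.ofReal_cos, Complex.ofReal_sin]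
  simp_rw [h1]
  have hI1 : Integrable (fun x => ((Real.cos (2*Real.pi*(t*x)) : ℝ) : ℂ)) μ :=
    (int_cos μ t).ofReal
  have hI2 : Integrable (fun x => ((Real.sin (2*Real.pi*(t*x)) : ℝ) : ℂ) * Complex.I) μ :=
    ((int_sin μ t).ofReal).mul_const Complex.I
  have e1 : ∫ x, ((Real.cos (2*Real.pi*(t*x)) : ℝ) : ℂ) ∂μ
      = ((∫ x, Real.cos (2*Real.pi*(t*x)) ∂μ : ℝ) : ℂ) := integral_ofReal
  have e2 : ∫ x, ((Real.sin (2*Real.pi*(t*x)) : ℝ) : ℂ) ∂μ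
      = ((∫ x, Real.sin (2*Real.pi*(t*x)) ∂μ : ℝ) : ℂ) := integral_ofReal
  rw [integral_add hI1 hI2, integral_mul_const, e1, e2]

set_option maxHeartbeats 1000000 in
lemma Fhat_self (μ : Measure ℝ) [IsProbabilityMeasure μ]
    (hμ : ∀ f : ℝ → ℝ, Continuous f →
      ∫ x, f x ∂μ =
        (1 / 2) * ((∫ x, f (x / 4) ∂μ) + ∫ x, f (x / 4 + 1 / 2) ∂μ)) (t : ℝ) :
    Fhat μ t = 1/2 * (1 + Complex.exp (((Real.pi * t : ℝ) : ℂ) * Complex.I)) * Fhat μ (t/4) := by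
  have hrw : ∀ x : ℝ, 2 * Real.pi * (t * (x/4)) = 2 * Real.pi * (t/4 * x) := fun x => by ring
  have hrw2 : ∀ x : ℝ, 2 * Real.pi * (t * (x/4 + 1/2))
      = 2 * Real.pi * (t/4 * x) + Real.pi * t := fun x => by ring
  have hcos := hμ (fun x => Real.cos (2 * Real.pi * (t * x))) (by continuity)
  have hsin := hμ (fun x => Real.sin (2 * Real.pi * (t * x))) (by continuity)
  simp only [hrw, hrw2] at hcos hsin
  simp only [Real.cos_add, Real.sin_add] at hcos hsin
  rw [integral_sub (((int_cos μ (t/4)).mul_const _)) ((int_sin μ (t/4)).mul_const _),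
    integral_mul_const, integral_mul_const] at hcos
  rw [integral_add (((int_sin μ (t/4)).mul_const _)) ((int_cos μ (t/4)).mul_const _),
    integral_mul_const, integral_mul_const] at hsin
  rw [Fhat_decomp μ t, Fhat_decomp μ (t/4), hcos, hsin, Complex.exp_mul_I]
  push_cast
  linear_combination (-(Complex.sin ((Real.pi:ℂ) * (t:ℂ)) *
    ((∫ x, Real.sin (2*Real.pi*(t/4*x)) ∂μ : ℝ) : ℂ)) / 2) * Complex.I_sq

lemma exp_pi_odd (r : ℤ) (hr : Odd r) :
    Complex.exp (((Real.pi * (r : ℝ) : ℝ) : ℂ) * Complex.I) = -1 := by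
  obtain ⟨j, hj⟩ := hr
  have : ((Real.pi * (r : ℝ) : ℝ) : ℂ) * Complex.I
      = (j : ℤ) * (2 * Real.pi * Complex.I) + Real.pi * Complex.I := by
    push_cast [hj]; ring
  rw [this, Complex.exp_add, Complex.exp_int_mul_two_pi_mul_I, Complex.exp_pi_mul_I, one_mul]

lemma Fhat_zero (μ : Measure ℝ) [IsProbabilityMeasure μ]
    (hμ : ∀ f : ℝ → ℝ, Continuous f →
      ∫ x, f x ∂μ =
        (1 / 2) * ((∫ x, f (x / 4) ∂μ) + ∫ x, f (x / 4 + 1 / 2) ∂μ)) :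
    ∀ (k : ℕ) (r : ℤ), Odd r → Fhat μ ((4 : ℝ) ^ k * (r : ℝ)) = 0 := by
  intro k
  induction k with
  | zero =>
    intro r hr
    rw [pow_zero, one_mul, Fhat_self μ hμ, exp_pi_odd r hr]
    ring
  | succ k ih =>
    intro r hr
    rw [Fhat_self μ hμ]
    have : (4 : ℝ) ^ (k+1) * (r : ℝ) / 4 = (4 : ℝ) ^ k * (r : ℝ) := by ring
    rw [this, ih r hr]
    ring

lemma sum_extend (n N : ℕ) (h : n ≤ N) (l : ℕ → ℕ) :
    ∑ i ∈ Finset.range N, (if i < n then (l i : ℝ) else 0) * 4 ^ i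
      = ∑ i ∈ Finset.range n, (l i : ℝ) * 4 ^ i := by
  rw [← Finset.sum_subset (Finset.range_subset_range.2 h)]
  · exact Finset.sum_congr rfl fun i hi => by rw [if_pos (Finset.mem_range.1 hi)]
  · intro i _ hi
    rw [if_neg (fun h' => hi (Finset.mem_range.2 h')), zero_mul]

lemma digits_factor : ∀ (N : ℕ) (d : ℕ → ℤ), (∀ i, d i = -1 ∨ d i = 0 ∨ d i = 1) →
    (∑ i ∈ Finset.range N, d i * 4 ^ i) ≠ 0 →
    ∃ (k : ℕ) (r : ℤ), Odd r ∧ (∑ i ∈ Finset.range N, d i * 4 ^ i) = 4 ^ k * r := by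
  intro N
  induction N with
  | zero => intro d _ h0; simp at h0
  | succ N ih =>
    intro d hd h0
    have hsum : ∑ i ∈ Finset.range (N+1), d i * 4 ^ i
        = 4 * (∑ i ∈ Finset.range N, d (i+1) * 4 ^ i) + d 0 := by
      rw [Finset.sum_range_succ']
      simp only [pow_succ, pow_zero, mul_one]
      rw [Finset.mul_sum]
      congr 1
      exact Finset.sum_congr rfl fun i _ => by ring
    rcases hd 0 with h | h | h
    · refine ⟨0, ∑ i ∈ Finset.range (N+1), d i * 4 ^ i, ?_, by ring⟩
      rw [hsum, h]
      exact ⟨2 * (∑ i ∈ Finset.range N, d (i+1) * 4 ^ i) - 1, by ring⟩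
    · have h0' : (∑ i ∈ Finset.range N, d (i+1) * 4 ^ i) ≠ 0 := by
        intro hz
        apply h0
        rw [hsum, hz, h]; ring
      obtain ⟨k, r, hr, hkr⟩ := ih (fun i => d (i+1)) (fun i => hd (i+1)) h0'
      exact ⟨k+1, r, hr, by rw [hsum, hkr, h]; ring⟩
    · refine ⟨0, ∑ i ∈ Finset.range (N+1), d i * 4 ^ i, ?_, by ring⟩
      rw [hsum, h]
      exact ⟨2 * (∑ i ∈ Finset.range N, d (i+1) * 4 ^ i), by ring⟩

theorem scale_four_exponentials_orthogonal (μ : Measure ℝ) [IsProbabilityMeasure μ]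
    (hμ : ∀ f : ℝ → ℝ, Continuous f →
      ∫ x, f x ∂μ =
        (1 / 2) * ((∫ x, f (x / 4) ∂μ) + ∫ x, f (x / 4 + 1 / 2) ∂μ)) :
    ∀ lam ∈ P4, ∀ lam' ∈ P4, lam ≠ lam' →
      ∫ x, Complex.exp ((((2 : ℝ) * Real.pi * ((lam' - lam) * x) : ℝ) : ℂ) * Complex.I) ∂μ = 0 := by
  rintro lam ⟨n, l, hl, rfl⟩ lam' ⟨n', l', hl', rfl⟩ hne
  set N := max n n' with hN
  set d : ℕ → ℤ := fun i => (if i < n' then (l' i : ℤ) else 0) - (if i < n then (l i : ℤ) else 0)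
    with hd
  set m : ℤ := ∑ i ∈ Finset.range N, d i * 4 ^ i with hm
  have hcast : (m : ℝ) = (∑ i ∈ Finset.range n', (l' i : ℝ) * 4 ^ i)
      - ∑ i ∈ Finset.range n, (l i : ℝ) * 4 ^ i := by
    rw [← sum_extend n N (le_max_left _ _) l, ← sum_extend n' N (le_max_right _ _) l',
      ← Finset.sum_sub_distrib, hm]
    push_cast
    refine Finset.sum_congr rfl fun i _ => ?_
    rw [hd]
    push_cast
    split_ifs <;> ring
  have hm0 : m ≠ 0 := by
    intro hz
    apply hne
    have : (m : ℝ) = 0 := by rw [hz]; norm_num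
    rw [hcast] at this
    linarith
  obtain ⟨k, r, hr, hkr⟩ := digits_factor N d
    (fun i => by
      have h1 := hl i
      have h2 := hl' i
      simp only [hd]
      split_ifs <;> omega) hm0
  have key : Fhat μ ((4 : ℝ) ^ k * (r : ℝ)) = 0 := Fhat_zero μ hμ k r hr
  have heq : (∑ i ∈ Finset.range n', (l' i : ℝ) * 4 ^ i)
      - ∑ i ∈ Finset.range n, (l i : ℝ) * 4 ^ i = (4 : ℝ) ^ k * (r : ℝ) := by
    rw [← hcast, hm, hkr]; push_cast; ring
  calc ∫ x, Complex.exp ((((2 : ℝ) * Real.pi *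
        (((∑ i ∈ Finset.range n', (l' i : ℝ) * 4 ^ i)
          - ∑ i ∈ Finset.range n, (l i : ℝ) * 4 ^ i) * x) : ℝ) : ℂ) * Complex.I) ∂μ
      = Fhat μ ((4 : ℝ) ^ k * (r : ℝ)) := by rw [Fhat]; simp_rw [heq]
    _ = 0 := key
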